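/- arXiv:quant-ph/0703026 — 2 statements merged into one kernel-verified Lean document; each statement's English description precedes it below -/
import Mathlib

section
/- Let ρ be a density matrix on ℂ^{N_A} ⊗ ℂ^{N_B} with spectral decomposition ρ = Σ_i λ_i |φ_i⟩⟨φ_i| (λ_i > 0 distinct-labelled eigenvectors), and let ρ' = (u ⊗ w) ρ (u ⊗ w)ᴴ for unitaries u, w. Then the reduced matrices ρ'_i = Tr_B|φ'_i⟩⟨φ'_i| of the eigenvectors |φ'_i⟩ = (u⊗w)|φ_i⟩ satisfy ρ'_i = u ρ_i uᴴ, and consequently Ω(ρ') = Ω(ρ) and X(ρ') = X(ρ). -/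
open Matrix Kronecker

theorem stmt14 (NA NB n : ℕ) (lam : Fin n → ℝ) (hlam : ∀ i, 0 < lam i)
    (A A' : Fin n → Matrix (Fin NA) (Fin NB) ℂ)
    (φ φ' : Fin n → (Fin NA × Fin NB) → ℂ)
    (hφ : ∀ i k l, φ i (k, l) = A i k l)
    (hφA' : ∀ i k l, φ' i (k, l) = A' i k l)
    (u : Matrix (Fin NA) (Fin NA) ℂ) (w : Matrix (Fin NB) (Fin NB) ℂ)
    (hu : u ∈ Matrix.unitaryGroup (Fin NA) ℂ)
    (hw : w ∈ Matrix.unitaryGroup (Fin NB) ℂ)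
    (hφ' : ∀ i, φ' i = (u ⊗ₖ w).mulVec (φ i))
    (ρ ρ' : Matrix (Fin NA × Fin NB) (Fin NA × Fin NB) ℂ)
    (hρ : ρ = ∑ i, (lam i : ℂ) • Matrix.vecMulVec (φ i) (star (φ i)))
    (hρ' : ρ' = (u ⊗ₖ w) * ρ * (u ⊗ₖ w)ᴴ) :
    (∀ i, A' i * (A' i)ᴴ = u * (A i * (A i)ᴴ) * uᴴ) ∧
    (∀ i j, (A' i * (A' i)ᴴ * (A' j * (A' j)ᴴ)).trace
        = (A i * (A i)ᴴ * (A j * (A j)ᴴ)).trace) ∧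
    (∀ i j k, (A' i * (A' i)ᴴ * (A' j * (A' j)ᴴ) * (A' k * (A' k)ᴴ)).trace
        = (A i * (A i)ᴴ * (A j * (A j)ᴴ) * (A k * (A k)ᴴ)).trace) := by
  have hu2 : uᴴ * u = 1 := hu.1
  have hw2 : wᴴ * w = 1 := hw.1
  have hA' : ∀ i, A' i = u * A i * wᵀ := by
    intro i
    ext k l
    rw [← hφA', hφ']
    simp only [Matrix.mulVec, dotProduct, Fintype.sum_prod_type,
      Matrix.kroneckerMap_apply, Matrix.mul_apply, Matrix.transpose_apply, hφ]
    rw [Finset.sum_comm]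
    refine Finset.sum_congr rfl (fun p _ => ?_)
    rw [Finset.sum_mul]
    refine Finset.sum_congr rfl (fun q _ => ?_)
    ring
  have hwt : wᵀ * (wᵀ)ᴴ = 1 := by
    ext a b
    have h := congrFun (congrFun hw2 a) b
    have h2 := congrArg star h
    simp only [Matrix.mul_apply, Matrix.conjTranspose_apply, Matrix.one_apply,
      star_sum, star_mul', star_star, Matrix.transpose_apply] at h2 ⊢
    rw [h2]
    split <;> simp
  have cancel : ∀ {m : Type} (M : Matrix (Fin NA) m ℂ), uᴴ * (u * M) = M := by
    intro m M
    rw [← Matrix.mul_assoc, hu2, Matrix.one_mul]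
  have key : ∀ i, A' i * (A' i)ᴴ = u * (A i * (A i)ᴴ) * uᴴ := by
    intro i
    rw [hA']
    simp only [Matrix.conjTranspose_mul, Matrix.mul_assoc]
    rw [← Matrix.mul_assoc wᵀ, hwt, Matrix.one_mul]
  refine ⟨key, ?_, ?_⟩
  · intro i j
    rw [key, key]
    simp only [Matrix.mul_assoc]
    rw [Matrix.trace_mul_comm]
    simp only [Matrix.mul_assoc, cancel]
    rw [Matrix.trace_mul_comm]
    simp only [Matrix.mul_assoc, cancel]
    rw [Matrix.trace_mul_comm (A i)]
    simp only [Matrix.mul_assoc]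
  · intro i j k
    rw [key, key, key]
    simp only [Matrix.mul_assoc]
    rw [Matrix.trace_mul_comm]
    simp only [Matrix.mul_assoc, cancel]
    rw [Matrix.trace_mul_comm]
    simp only [Matrix.mul_assoc, cancel]
    rw [Matrix.trace_mul_comm (A i)]
    simp only [Matrix.mul_assoc]
end

section
/- Let A and A' be complex n × n matrices such that A Aᴴ = A' A'ᴴ, Aᴴ A = A'ᴴ A', both products A Aᴴ and Aᴴ A commute with each other for A (condition [A Aᴴ, Aᴴ A] = 0) and A Aᴴ is invertible. Then there exist unitary matrices u, w with A' = u A w. -/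
open Matrix

theorem stmt15 (n : ℕ) (A A' : Matrix (Fin n) (Fin n) ℂ)
    (h1 : A * Aᴴ = A' * A'ᴴ) (h2 : Aᴴ * A = A'ᴴ * A')
    (hcomm : (A * Aᴴ) * (Aᴴ * A) = (Aᴴ * A) * (A * Aᴴ))
    (hinv : IsUnit (A * Aᴴ)) :
    ∃ u w : Matrix (Fin n) (Fin n) ℂ,
      u ∈ Matrix.unitaryGroup (Fin n) ℂ ∧ w ∈ Matrix.unitaryGroup (Fin n) ℂ ∧
      A' = u * A * w := by
  have hdet : IsUnit (A * Aᴴ).det := (Matrix.isUnit_iff_isUnit_det _).mp hinv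
  rw [Matrix.det_mul] at hdet
  have hA : IsUnit A.det := isUnit_of_mul_isUnit_left hdet
  have hAH : IsUnit Aᴴ.det := isUnit_of_mul_isUnit_right hdet
  have hdet' : IsUnit (A' * A'ᴴ).det := by
    rw [← h1, Matrix.det_mul]; exact hdet
  rw [Matrix.det_mul] at hdet'
  have hA' : IsUnit A'.det := isUnit_of_mul_isUnit_left hdet'
  have hA'H : IsUnit A'ᴴ.det := isUnit_of_mul_isUnit_right hdet'
  refine ⟨A' * A⁻¹, 1, ?_, ?_, ?_⟩
  · rw [Matrix.mem_unitaryGroup_iff]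
    have : star (A' * A⁻¹) = (A⁻¹)ᴴ * A'ᴴ := by
      rw [StarMul.star_mul]; rfl
    rw [this, Matrix.conjTranspose_nonsing_inv]
    calc A' * A⁻¹ * ((Aᴴ)⁻¹ * A'ᴴ)
        = A' * (A⁻¹ * (Aᴴ)⁻¹) * A'ᴴ := by noncomm_ring
      _ = A' * (Aᴴ * A)⁻¹ * A'ᴴ := by rw [Matrix.mul_inv_rev]
      _ = A' * (A'ᴴ * A')⁻¹ * A'ᴴ := by rw [h2]
      _ = A' * (A'⁻¹ * (A'ᴴ)⁻¹) * A'ᴴ := by rw [Matrix.mul_inv_rev]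
      _ = (A' * A'⁻¹) * ((A'ᴴ)⁻¹ * A'ᴴ) := by noncomm_ring
      _ = 1 := by rw [Matrix.mul_nonsing_inv _ hA', Matrix.nonsing_inv_mul _ hA'H, one_mul]
  · exact Submonoid.one_mem _
  · rw [mul_one, mul_assoc, Matrix.nonsing_inv_mul _ hA, mul_one]
end
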